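/- For μ > 0 and e > 0, the function k_{e,μ}(p) := 1/(|p²−μ|+e) − 1/(p²+μ+e) on ℝ³ is nonnegative and integrable, with ∫_{ℝ³} k_{e,μ}(p) dp = (2π)³ μ^{1/2} f(e/μ), where f is defined by f(t) = (1/(2π²)) ∫₀^∞ p²(1/(|p²−1|+t) − 1/(p²+1+t)) dp. -/

import Mathlib

open Real Set MeasureTheory

/-- `f(t) = (1/(2π²)) ∫₀^∞ p² (1/(|p²−1|+t) − 1/(p²+1+t)) dp`. -/
noncomputable def fInt (t : ℝ) : ℝ :=
  (1 / (2 * Real.pi ^ 2)) *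
    ∫ p in Set.Ioi (0 : ℝ), p ^ 2 * (1 / (|p ^ 2 - 1| + t) - 1 / (p ^ 2 + 1 + t))

/-- `k_{e,μ}(p) = 1/(|p²−μ|+e) − 1/(p²+μ+e)` on `ℝ³`. -/
noncomputable def kFun (e μ : ℝ) (p : EuclideanSpace ℝ (Fin 3)) : ℝ :=
  1 / (|‖p‖ ^ 2 - μ| + e) - 1 / (‖p‖ ^ 2 + μ + e)

theorem kBound (e μ : ℝ) (he : 0 < e) (hμ : 0 < μ) (r : ℝ) (hr : 0 ≤ r) :
    1/(|r^2 - μ| + e) - 1/(r^2 + μ + e) ≤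
      (8 * μ * (e + 2*μ) / (e * (min 1 (μ+e))^2)) * ((1 + r)^4)⁻¹ := by
  set c := min 1 (μ+e) with hc
  have hc0 : 0 < c := lt_min one_pos (by positivity)
  have hc1 : c ≤ 1 := min_le_left _ _
  have hc2 : c ≤ μ + e := min_le_right _ _
  set A := |r^2 - μ| + e with hA
  set B := r^2 + μ + e with hB
  have hA0 : 0 < A := by positivity
  have hB0 : 0 < B := by positivity
  have habs : r^2 - μ ≤ |r^2 - μ| := le_abs_self _
  have hBA : B - A ≤ 2*μ := by rw [hA, hB]; linarith
  have h1 : 1/A - 1/B ≤ 2*μ/(A*B) := by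
    rw [div_sub_div _ _ hA0.ne' hB0.ne', div_le_div_iff₀ (by positivity) (by positivity)]
    nlinarith [mul_pos hA0 hB0]
  have h2 : e * B ≤ (e + 2*μ) * A := by
    rcases le_or_gt μ (r^2) with h | h
    · rw [hA, hB, abs_of_nonneg (by linarith)]; nlinarith
    · rw [hA, hB, abs_of_neg (by linarith)]; nlinarith
  have h3 : c * (1+r)^2 ≤ 2 * B := by
    rw [hB]
    nlinarith [mul_nonneg hc0.le (sq_nonneg (1-r)), mul_nonneg (sub_nonneg.2 hc1) (sq_nonneg r)]
  have h4 : e * c^2 * (1+r)^4 ≤ 4*(e + 2*μ) * (A*B) := by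
    have hB2 : c^2 * (1+r)^4 ≤ 4 * B^2 := by
      have := mul_self_le_mul_self (by positivity) h3
      nlinarith
    have hAB2 : e * B^2 ≤ (e + 2*μ) * (A*B) := by
      nlinarith [mul_le_mul_of_nonneg_right h2 hB0.le]
    nlinarith [mul_le_mul_of_nonneg_left hB2 he.le]
  refine h1.trans ?_
  rw [show 8 * μ * (e + 2*μ) / (e * c^2) * ((1 + r)^4)⁻¹
      = 8 * μ * (e + 2*μ) / (e * c^2 * (1 + r)^4) by rw [← div_eq_mul_inv, div_div],
    div_le_div_iff₀ (by positivity) (by positivity)]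
  nlinarith [mul_le_mul_of_nonneg_left h4 (by positivity : (0:ℝ) ≤ 2*μ)]

theorem kFun_nonneg_integrable_eval (e μ : ℝ) (he : 0 < e) (hμ : 0 < μ) :
    (∀ p : EuclideanSpace ℝ (Fin 3), 0 ≤ kFun e μ p) ∧
    Integrable (kFun e μ) volume ∧
    ∫ p : EuclideanSpace ℝ (Fin 3), kFun e μ p =
      (2 * Real.pi) ^ 3 * Real.sqrt μ * fInt (e / μ) := by
  -- nonnegativity
  have hnn : ∀ p : EuclideanSpace ℝ (Fin 3), 0 ≤ kFun e μ p := by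
    intro p
    have h1 : |‖p‖^2 - μ| ≤ ‖p‖^2 + μ := by
      refine (abs_sub _ _).trans ?_
      rw [abs_of_nonneg (sq_nonneg _), abs_of_pos hμ]
    unfold kFun
    have := one_div_le_one_div_of_le (by positivity : (0:ℝ) < |‖p‖^2 - μ| + e)
      (by linarith : |‖p‖^2 - μ| + e ≤ ‖p‖^2 + μ + e)
    linarith
  refine ⟨hnn, ?_, ?_⟩
  · -- integrability
    have hcont : Continuous (kFun e μ) := by
      have h1 : Continuous fun p : EuclideanSpace ℝ (Fin 3) => |‖p‖^2 - μ| + e := by fun_prop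
      have h2 : Continuous fun p : EuclideanSpace ℝ (Fin 3) => ‖p‖^2 + μ + e := by fun_prop
      exact (continuous_const.div h1 fun p => by positivity).sub
        (continuous_const.div h2 fun p => by positivity)
    have hnr : ((Module.finrank ℝ (EuclideanSpace ℝ (Fin 3))) : ℝ) < 4 := by
      simp [finrank_euclideanSpace]; norm_num
    refine ((integrable_one_add_norm (μ := volume) hnr).const_mul
      (8 * μ * (e + 2*μ) / (e * (min 1 (μ+e))^2))).mono' hcont.aestronglyMeasurable
      (ae_of_all _ fun p => ?_)
    rw [Real.norm_of_nonneg (hnn p)]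
    have h4 : (1 + ‖p‖) ^ (-(4:ℝ)) = ((1 + ‖p‖)^(4:ℕ))⁻¹ := by
      rw [Real.rpow_neg (by positivity), show (4:ℝ) = ((4:ℕ):ℝ) by norm_num,
        Real.rpow_natCast]
    rw [h4]
    exact kBound e μ he hμ ‖p‖ (norm_nonneg p)
  · -- the integral
    set F : ℝ → ℝ := fun r => 1 / (|r ^ 2 - μ| + e) - 1 / (r ^ 2 + μ + e) with hF
    have hk : kFun e μ = fun x => F ‖x‖ := rfl
    have key := integral_fun_norm_addHaar (volume : Measure (EuclideanSpace ℝ (Fin 3))) F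
    have hdim : Module.finrank ℝ (EuclideanSpace ℝ (Fin 3)) = 3 := finrank_euclideanSpace_fin
    rw [hdim] at key
    have hvol : (volume (Metric.ball (0:EuclideanSpace ℝ (Fin 3)) 1)).toReal = 4/3*π := by
      rw [EuclideanSpace.volume_ball]
      have hg : Real.Gamma (((3:ℕ):ℝ)/2 + 1) = 3/4 * Real.sqrt π := by
        rw [show ((3:ℕ):ℝ)/2 + 1 = 3/2 + 1 by norm_num, Real.Gamma_add_one (by norm_num),
          show (3:ℝ)/2 = 1/2 + 1 by norm_num, Real.Gamma_add_one (by norm_num),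
          Real.Gamma_one_half_eq]
        ring
      rw [Fintype.card_fin, hg]
      have hsp : Real.sqrt π ^ 3 = π * Real.sqrt π := by rw [pow_succ, sq_sqrt pi_pos.le]
      have hspne : Real.sqrt π ≠ 0 := by positivity
      rw [ENNReal.toReal_mul, ENNReal.toReal_pow, ENNReal.toReal_ofReal (by norm_num),
        ENNReal.toReal_ofReal (by positivity), hsp]
      field_simp
    -- change of variables in the radial integral
    have hμs : (0:ℝ) < Real.sqrt μ := Real.sqrt_pos.mpr hμ
    have hcv := integral_comp_mul_left_Ioi (fun y => y^2 * F y) 0 hμs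
    have hpt : ∀ x : ℝ, (Real.sqrt μ * x)^2 * F (Real.sqrt μ * x)
        = Real.sqrt μ * ((Real.sqrt μ)⁻¹ *
          (x^2 * (1 / (|x ^ 2 - 1| + e/μ) - 1 / (x ^ 2 + 1 + e/μ)))) := by
      intro x
      have h1 : (Real.sqrt μ * x)^2 = μ * x^2 := by rw [mul_pow, Real.sq_sqrt hμ.le]
      have h2 : |μ * x^2 - μ| + e = μ * (|x^2 - 1| + e/μ) := by
        rw [show μ * x^2 - μ = μ * (x^2 - 1) by ring, abs_mul, abs_of_pos hμ]
        field_simp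
      have h3 : μ * x^2 + μ + e = μ * (x^2 + 1 + e/μ) := by field_simp
      have hd1 : (0:ℝ) < |x^2 - 1| + e/μ := by positivity
      have hd2 : (0:ℝ) < x^2 + 1 + e/μ := by positivity
      rw [hF]
      simp only
      rw [h1, h2, h3, ← mul_assoc, mul_inv_cancel₀ hμs.ne', one_mul]
      rw [one_div, one_div, mul_inv, mul_inv, ← one_div μ]
      have : (0:ℝ) < μ := hμ
      field_simp
    have hrad : ∫ y in Ioi (0:ℝ), y^2 * F y
        = Real.sqrt μ * ∫ x in Ioi (0:ℝ),
            x^2 * (1 / (|x ^ 2 - 1| + e/μ) - 1 / (x ^ 2 + 1 + e/μ)) := by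
      have h0 : Real.sqrt μ * (0:ℝ) = 0 := mul_zero _
      rw [h0] at hcv
      have : (∫ x in Ioi (0:ℝ), (Real.sqrt μ * x)^2 * F (Real.sqrt μ * x))
          = (Real.sqrt μ)⁻¹ * ∫ y in Ioi (0:ℝ), y^2 * F y := by
        simpa [smul_eq_mul] using hcv
      rw [← inv_mul_eq_iff_eq_mul₀ hμs.ne', ← this]
      refine setIntegral_congr_fun measurableSet_Ioi fun x _ => ?_
      rw [hpt x, ← mul_assoc, mul_inv_cancel₀ hμs.ne', one_mul]
    rw [hk, key, measureReal_def, hvol]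
    have hI : (∫ y in Ioi (0:ℝ), y ^ (3-1) • F y) = ∫ y in Ioi (0:ℝ), y^2 * F y := by
      norm_num [smul_eq_mul]
    rw [hI, hrad]
    unfold fInt
    rw [nsmul_eq_mul, smul_eq_mul]
    have hpi := Real.pi_ne_zero
    generalize (∫ p in Ioi (0:ℝ), p ^ 2 * (1 / (|p ^ 2 - 1| + e/μ) - 1 / (p ^ 2 + 1 + e/μ))) = I
    field_simp
    ring
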